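/- Let v be a unit vector in H₃ whose minimal local eigenvalues lie in the interior of the Kirwan polytope, i.e., p_i(v) < 1/2 for all i ∈ {1,2,3} and p_i(v) < p_j(v) + p_k(v) for every permutation (i,j,k) of (1,2,3). Then there exists a unit vector w ∈ H₃ with p_i(w) = p_i(v) for i = 1,2,3 that is not LU-equivalent to v. In other words, such a state is never determined, up to local unitaries, by the spectra of its one-qubit reduced density matrices. -/

import Mathlib

open scoped BigOperators

/-- The three-qubit Hilbert space. -/
abbrev H3 := (Fin 2 × Fin 2 × Fin 2) → ℂ

/-- Squared Hermitian norm of a vector in `H3`. -/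
noncomputable def normSq3 (v : H3) : ℝ := ∑ x : Fin 2 × Fin 2 × Fin 2, Complex.normSq (v x)

/-- First one-qubit reduced density matrix. -/
noncomputable def rho1 (v : H3) : Matrix (Fin 2) (Fin 2) ℂ :=
  Matrix.of fun a a' => ∑ b : Fin 2, ∑ c : Fin 2, v (a, b, c) * star (v (a', b, c))

/-- Second one-qubit reduced density matrix. -/
noncomputable def rho2 (v : H3) : Matrix (Fin 2) (Fin 2) ℂ :=
  Matrix.of fun b b' => ∑ a : Fin 2, ∑ c : Fin 2, v (a, b, c) * star (v (a, b', c))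

/-- Third one-qubit reduced density matrix. -/
noncomputable def rho3 (v : H3) : Matrix (Fin 2) (Fin 2) ℂ :=
  Matrix.of fun c c' => ∑ a : Fin 2, ∑ b : Fin 2, v (a, b, c) * star (v (a, b, c'))

/-- Minimal (real) eigenvalue of a 2×2 complex matrix. -/
noncomputable def minEig (ρ : Matrix (Fin 2) (Fin 2) ℂ) : ℝ :=
  sInf {t : ℝ | (t : ℂ) ∈ spectrum ℂ ρ}

noncomputable def p1 (v : H3) : ℝ := minEig (rho1 v)
noncomputable def p2 (v : H3) : ℝ := minEig (rho2 v)
noncomputable def p3 (v : H3) : ℝ := minEig (rho3 v)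

/-- The action of a triple of 2×2 matrices on `H3` by the tensor product. -/
noncomputable def tensor3 (A1 A2 A3 : Matrix (Fin 2) (Fin 2) ℂ) (v : H3) : H3 :=
  fun x => ∑ a' : Fin 2, ∑ b' : Fin 2, ∑ c' : Fin 2,
    A1 x.1 a' * A2 x.2.1 b' * A3 x.2.2 c' * v (a', b', c')

/-- Local unitary equivalence of three-qubit states. -/
def LUequiv (v w : H3) : Prop :=
  ∃ U1 U2 U3 : Matrix (Fin 2) (Fin 2) ℂ,
    U1 ∈ Matrix.unitaryGroup (Fin 2) ℂ ∧ U2 ∈ Matrix.unitaryGroup (Fin 2) ℂ ∧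
    U3 ∈ Matrix.unitaryGroup (Fin 2) ℂ ∧ w = tensor3 U1 U2 U3 v

/-- The three-qubit W state. -/
noncomputable def wState : H3 := fun x =>
  if (x.1 = 1 ∧ x.2.1 = 0 ∧ x.2.2 = 0) ∨ (x.1 = 0 ∧ x.2.1 = 1 ∧ x.2.2 = 0) ∨
      (x.1 = 0 ∧ x.2.1 = 0 ∧ x.2.2 = 1)
  then ((1 / Real.sqrt 3 : ℝ) : ℂ) else 0

/-- The SLOCC class of the W state. -/
def WClass : Set H3 :=
  {v | ∃ (A1 A2 A3 : Matrix (Fin 2) (Fin 2) ℂ) (l : ℂ),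
    A1.det = 1 ∧ A2.det = 1 ∧ A3.det = 1 ∧ l ≠ 0 ∧ v = l • tensor3 A1 A2 A3 wState}


set_option maxHeartbeats 1000000


lemma sqrt_sub_sqrt_le (a b : ℝ) (hb : 0 ≤ b) (hba : b ≤ a) :
    Real.sqrt a - Real.sqrt b ≤ Real.sqrt (a - b) := by
  have h1 : Real.sqrt a ≤ Real.sqrt b + Real.sqrt (a - b) := by
    rw [Real.sqrt_le_iff]
    refine ⟨by positivity, ?_⟩
    have e1 : Real.sqrt b ^ 2 = b := Real.sq_sqrt hb
    have e2 : Real.sqrt (a-b) ^ 2 = a - b := Real.sq_sqrt (by linarith)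
    nlinarith [Real.sqrt_nonneg b, Real.sqrt_nonneg (a-b)]
  linarith

lemma key_bounds (g0 q A δ h : ℝ) (hg0p : 0 < g0) (hg0half : g0 ≤ 1/2)
    (hAq : A = 1 - 4*q) (hgq : g0 ≤ q) (hgA : 2*g0 ≤ A)
    (hgd2 : g0 ≤ δ^2/48) (hgd4 : g0 ≤ δ/4) (hδp : 0 < δ)
    (hh0 : 0 ≤ h) (hhg : h ≤ g0) :
    0 ≤ (1-g0)^2 - 4*q + 4*h ∧
    ((1-g0) - Real.sqrt ((1-g0)^2 - 4*q + 4*h))/2 *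
      ((1-g0) - ((1-g0) - Real.sqrt ((1-g0)^2 - 4*q + 4*h))/2) = q - h ∧
    0 ≤ ((1-g0) - Real.sqrt ((1-g0)^2 - 4*q + 4*h))/2 ∧
    ((1-g0) - Real.sqrt ((1-g0)^2 - 4*q + 4*h))/2 ≤ (1-g0)/2 ∧
    |((1-g0) - Real.sqrt ((1-g0)^2 - 4*q + 4*h))/2 - (1 - Real.sqrt A)/2| ≤ δ/4 := by
  set B := (1-g0)^2 - 4*q + 4*h with hB
  have hBA : B = A - (2*g0 - g0^2) + 4*h := by rw [hB, hAq]; ring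
  have hB0 : 0 ≤ B := by nlinarith
  have hBu : B ≤ (1-g0)^2 := by rw [hB]; nlinarith
  have hsB : Real.sqrt B ^ 2 = B := Real.sq_sqrt hB0
  have hsBn : 0 ≤ Real.sqrt B := Real.sqrt_nonneg _
  have hsBu : Real.sqrt B ≤ 1 - g0 := by
    rw [show (1:ℝ) - g0 = Real.sqrt ((1-g0)^2) from (Real.sqrt_sq (by linarith)).symm]
    exact Real.sqrt_le_sqrt hBu
  refine ⟨hB0, by nlinarith, by linarith, by linarith, ?_⟩
  have hA0 : 0 ≤ A := by linarith
  have hsA : Real.sqrt A ^ 2 = A := Real.sq_sqrt hA0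
  have hsAn : 0 ≤ Real.sqrt A := Real.sqrt_nonneg _
  have hdiff : |Real.sqrt A - Real.sqrt B| ≤ Real.sqrt (3*g0) := by
    rcases le_total B A with hc | hc
    · rw [abs_of_nonneg (by linarith [Real.sqrt_le_sqrt hc])]
      refine le_trans (sqrt_sub_sqrt_le _ _ hB0 hc) (Real.sqrt_le_sqrt ?_)
      rw [hBA]; nlinarith
    · rw [abs_of_nonpos (by linarith [Real.sqrt_le_sqrt hc]), neg_sub]
      refine le_trans (sqrt_sub_sqrt_le _ _ hA0 hc) (Real.sqrt_le_sqrt ?_)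
      rw [hBA]; nlinarith
  have h3g : Real.sqrt (3*g0) ≤ δ/4 := by
    rw [show δ/4 = Real.sqrt ((δ/4)^2) from (Real.sqrt_sq (by linarith)).symm]
    apply Real.sqrt_le_sqrt; nlinarith
  have hd2 : ((1-g0) - Real.sqrt B)/2 - (1 - Real.sqrt A)/2
      = (Real.sqrt A - Real.sqrt B)/2 - g0/2 := by ring
  rw [hd2, abs_le]; rw [abs_le] at hdiff
  constructor <;> nlinarith [hdiff.1, hdiff.2]

lemma exists_params (P1 P2 P3 : ℝ)
    (h1h : P1 < 1/2) (h2h : P2 < 1/2) (h3h : P3 < 1/2)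
    (t1 : P1 < P2 + P3) (t2 : P2 < P1 + P3) (t3 : P3 < P1 + P2) :
    ∃ x y z t g : ℝ, 0 < x ∧ 0 < y ∧ 0 < z ∧ 0 < t ∧ 0 < g ∧ x+y+z+t+g = 1 ∧
      (x+y)*(z+t) + x*g = P1*(1-P1) ∧ (x+z)*(y+t) + x*g = P2*(1-P2) ∧
      (x+t)*(y+z) + x*g = P3*(1-P3) := by
  have hP1 : 0 < P1 := by linarith
  have hP2 : 0 < P2 := by linarith
  have hP3 : 0 < P3 := by linarith
  set q1 := P1 * (1 - P1) with hq1
  set q2 := P2 * (1 - P2) with hq2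
  set q3 := P3 * (1 - P3) with hq3
  have hq1p : 0 < q1 := by rw [hq1]; nlinarith only [hP1, h1h]
  have hq2p : 0 < q2 := by rw [hq2]; nlinarith only [hP2, h2h]
  have hq3p : 0 < q3 := by rw [hq3]; nlinarith only [hP3, h3h]
  have hA1 : (1:ℝ) - 4*q1 = (1-2*P1)^2 := by rw [hq1]; ring
  have hA2 : (1:ℝ) - 4*q2 = (1-2*P2)^2 := by rw [hq2]; ring
  have hA3 : (1:ℝ) - 4*q3 = (1-2*P3)^2 := by rw [hq3]; ring
  have hsA1 : Real.sqrt (1 - 4*q1) = 1 - 2*P1 := by rw [hA1, Real.sqrt_sq (by linarith)]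
  have hsA2 : Real.sqrt (1 - 4*q2) = 1 - 2*P2 := by rw [hA2, Real.sqrt_sq (by linarith)]
  have hsA3 : Real.sqrt (1 - 4*q3) = 1 - 2*P3 := by rw [hA3, Real.sqrt_sq (by linarith)]
  have hA1p : (0:ℝ) < 1 - 4*q1 := by rw [hA1]; nlinarith only [h1h]
  have hA2p : (0:ℝ) < 1 - 4*q2 := by rw [hA2]; nlinarith only [h2h]
  have hA3p : (0:ℝ) < 1 - 4*q3 := by rw [hA3]; nlinarith only [h3h]
  set δ := min (P2+P3-P1) (min (P1+P3-P2) (P1+P2-P3)) with hδ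
  have hδp : 0 < δ := lt_min (by linarith) (lt_min (by linarith) (by linarith))
  have hδ1 : δ ≤ P2+P3-P1 := min_le_left _ _
  have hδ2 : δ ≤ P1+P3-P2 := le_trans (min_le_right _ _) (min_le_left _ _)
  have hδ3 : δ ≤ P1+P2-P3 := le_trans (min_le_right _ _) (min_le_right _ _)
  set qm := min q1 (min q2 q3) with hqm
  set Am := min (1-4*q1) (min (1-4*q2) (1-4*q3)) with hAm
  have hqmp : 0 < qm := lt_min hq1p (lt_min hq2p hq3p)
  have hAmp : 0 < Am := lt_min hA1p (lt_min hA2p hA3p)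
  set g0 := min (1/2) (min qm (min (Am/2) (min (δ^2/48) (δ/4)))) with hg0
  have hg0p : 0 < g0 := by
    refine lt_min (by norm_num) (lt_min hqmp (lt_min (by linarith) (lt_min ?_ ?_)))
    · have := mul_pos hδp hδp
      nlinarith only [hδp]
    · linarith
  have hg0half : g0 ≤ 1/2 := min_le_left _ _
  have hg0qm : g0 ≤ qm := le_trans (min_le_right _ _) (min_le_left _ _)
  have hg0Am : g0 ≤ Am/2 := le_trans (min_le_right _ _) (le_trans (min_le_right _ _) (min_le_left _ _))
  have hg0d2 : g0 ≤ δ^2/48 := le_trans (min_le_right _ _) (le_trans (min_le_right _ _) (le_trans (min_le_right _ _) (min_le_left _ _)))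
  have hg0d4 : g0 ≤ δ/4 := le_trans (min_le_right _ _) (le_trans (min_le_right _ _) (le_trans (min_le_right _ _) (min_le_right _ _)))
  have hgq1 : g0 ≤ q1 := le_trans hg0qm (min_le_left _ _)
  have hgq2 : g0 ≤ q2 := le_trans hg0qm (le_trans (min_le_right _ _) (min_le_left _ _))
  have hgq3 : g0 ≤ q3 := le_trans hg0qm (le_trans (min_le_right _ _) (min_le_right _ _))
  have hgA1 : 2*g0 ≤ 1-4*q1 := by
    have h' := min_le_left (1-4*q1) (min (1-4*q2) (1-4*q3))
    rw [← hAm] at h'; linarith only [h', hg0Am]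
  have hgA2 : 2*g0 ≤ 1-4*q2 := by
    have h' := le_trans (min_le_right (1-4*q1) _) (min_le_left (1-4*q2) (1-4*q3))
    rw [← hAm] at h'; linarith only [h', hg0Am]
  have hgA3 : 2*g0 ≤ 1-4*q3 := by
    have h' := le_trans (min_le_right (1-4*q1) _) (min_le_right (1-4*q2) (1-4*q3))
    rw [← hAm] at h'; linarith only [h', hg0Am]
  have k1 := fun (h : ℝ) (hh0 : 0 ≤ h) (hhg : h ≤ g0) =>
    key_bounds g0 q1 (1-4*q1) δ h hg0p hg0half rfl hgq1 hgA1 hg0d2 hg0d4 hδp hh0 hhg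
  have k2 := fun (h : ℝ) (hh0 : 0 ≤ h) (hhg : h ≤ g0) =>
    key_bounds g0 q2 (1-4*q2) δ h hg0p hg0half rfl hgq2 hgA2 hg0d2 hg0d4 hδp hh0 hhg
  have k3 := fun (h : ℝ) (hh0 : 0 ≤ h) (hhg : h ≤ g0) =>
    key_bounds g0 q3 (1-4*q3) δ h hg0p hg0half rfl hgq3 hgA3 hg0d2 hg0d4 hδp hh0 hhg
  set m : ℝ → ℝ → ℝ := fun q h => ((1-g0) - Real.sqrt ((1-g0)^2 - 4*q + 4*h))/2 with hm
  set F : ℝ → ℝ := fun h => h - g0 * ((m q2 h + m q3 h - m q1 h)/2) with hF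
  have hmval : ∀ q h : ℝ, m q h = ((1-g0) - Real.sqrt ((1-g0)^2 - 4*q + 4*h))/2 := by
    intro q h; rw [hm]
  have hFval : ∀ h : ℝ, F h = h - g0 * ((m q2 h + m q3 h - m q1 h)/2) := by
    intro h; rw [hF]
  have hcont : ContinuousOn F (Set.Icc 0 g0) := by
    apply Continuous.continuousOn
    rw [hF, hm]
    fun_prop
  have hclose : ∀ h, 0 ≤ h → h ≤ g0 →
      |m q1 h - P1| ≤ δ/4 ∧ |m q2 h - P2| ≤ δ/4 ∧ |m q3 h - P3| ≤ δ/4 := by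
    intro h hh0 hhg
    have c1 := (k1 h hh0 hhg).2.2.2.2
    have c2 := (k2 h hh0 hhg).2.2.2.2
    have c3 := (k3 h hh0 hhg).2.2.2.2
    rw [hsA1, show (1-(1-2*P1))/2 = P1 by ring] at c1
    rw [hsA2, show (1-(1-2*P2))/2 = P2 by ring] at c2
    rw [hsA3, show (1-(1-2*P3))/2 = P3 by ring] at c3
    rw [hmval]
    exact ⟨c1, c2, c3⟩
  have hF0 : F 0 ≤ 0 := by
    obtain ⟨c1, c2, c3⟩ := hclose 0 le_rfl hg0p.le
    rw [abs_le] at c1 c2 c3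
    have hX : 0 ≤ (m q2 0 + m q3 0 - m q1 0)/2 := by
      linarith only [c1.2, c2.1, c3.1, hδ1, hδp]
    have := mul_nonneg hg0p.le hX
    rw [hFval]
    linarith only [this]
  have hFg0 : 0 ≤ F g0 := by
    have b1 := (k1 g0 hg0p.le le_rfl).2.2.1
    have b2 := (k2 g0 hg0p.le le_rfl).2.2.2.1
    have b3 := (k3 g0 hg0p.le le_rfl).2.2.2.1
    rw [← hmval] at b1 b2 b3
    have hX : (m q2 g0 + m q3 g0 - m q1 g0)/2 ≤ 1/2 := by
      linarith only [b1, b2, b3, hg0p]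
    have := mul_le_mul_of_nonneg_left hX hg0p.le
    rw [hFval]
    linarith only [this, hg0p]
  obtain ⟨hstar, hsmem, hFh⟩ := intermediate_value_Icc hg0p.le hcont ⟨hF0, hFg0⟩
  obtain ⟨hh0, hhg⟩ := hsmem
  obtain ⟨c1, c2, c3⟩ := hclose hstar hh0 hhg
  rw [abs_le] at c1 c2 c3
  have e1 := (k1 hstar hh0 hhg).2.1
  have e2 := (k2 hstar hh0 hhg).2.1
  have e3 := (k3 hstar hh0 hhg).2.1
  have b1 := (k1 hstar hh0 hhg).2.2.2.1
  have b2 := (k2 hstar hh0 hhg).2.2.2.1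
  have b3 := (k3 hstar hh0 hhg).2.2.2.1
  rw [← hmval] at b1 b2 b3
  have e1' : m q1 hstar * ((1-g0) - m q1 hstar) = q1 - hstar := by
    rw [hmval q1 hstar]; exact e1
  have e2' : m q2 hstar * ((1-g0) - m q2 hstar) = q2 - hstar := by
    rw [hmval q2 hstar]; exact e2
  have e3' : m q3 hstar * ((1-g0) - m q3 hstar) = q3 - hstar := by
    rw [hmval q3 hstar]; exact e3
  clear e1 e2 e3
  set M1 := m q1 hstar
  set M2 := m q2 hstar
  set M3 := m q3 hstar
  have hfix : hstar = g0 * ((M2 + M3 - M1)/2) := by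
    have h0 : F hstar = 0 := hFh
    rw [hFval] at h0
    linarith only [h0]
  refine ⟨(M2+M3-M1)/2, (1-g0) - (M1+M2+M3)/2, (M1+M2-M3)/2, (M1+M3-M2)/2, g0,
    by linarith only [c1.2, c2.1, c3.1, hδ1, hδp],
    by linarith only [b1, b2, b3, hg0half],
    by linarith only [c1.1, c2.1, c3.2, hδ3, hδp],
    by linarith only [c1.1, c2.2, c3.1, hδ2, hδp],
    hg0p, by ring, ?_, ?_, ?_⟩
  · calc ((M2+M3-M1)/2 + ((1-g0) - (M1+M2+M3)/2)) * ((M1+M2-M3)/2 + (M1+M3-M2)/2)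
          + (M2+M3-M1)/2 * g0
        = M1 * ((1-g0) - M1) + g0 * ((M2+M3-M1)/2) := by ring
      _ = q1 - hstar + hstar := by rw [e1', ← hfix]
      _ = q1 := by ring
  · calc ((M2+M3-M1)/2 + (M1+M2-M3)/2) * (((1-g0) - (M1+M2+M3)/2) + (M1+M3-M2)/2)
          + (M2+M3-M1)/2 * g0
        = M2 * ((1-g0) - M2) + g0 * ((M2+M3-M1)/2) := by ring
      _ = q2 - hstar + hstar := by rw [e2', ← hfix]
      _ = q2 := by ring
  · calc ((M2+M3-M1)/2 + (M1+M3-M2)/2) * (((1-g0) - (M1+M2+M3)/2) + (M1+M2-M3)/2)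
          + (M2+M3-M1)/2 * g0
        = M3 * ((1-g0) - M3) + g0 * ((M2+M3-M1)/2) := by ring
      _ = q3 - hstar + hstar := by rw [e3', ← hfix]
      _ = q3 := by ring

lemma minEig_eq (M : Matrix (Fin 2) (Fin 2) ℂ) (x y : ℝ) (z : ℂ)
    (hx : M 0 0 = (x:ℂ)) (hy : M 1 1 = (y:ℂ)) (hz : M 0 1 = z)
    (hz' : M 1 0 = (starRingEnd ℂ) z) :
    minEig M = (x + y - Real.sqrt ((x-y)^2 + 4 * Complex.normSq z)) / 2 := by
  have hd : (0:ℝ) ≤ (x-y)^2 + 4 * Complex.normSq z := by nlinarith [sq_nonneg (x-y), Complex.normSq_nonneg z]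
  set s := Real.sqrt ((x-y)^2 + 4 * Complex.normSq z) with hs
  have hs2 : s^2 = (x-y)^2 + 4 * Complex.normSq z := Real.sq_sqrt hd
  have hs0 : 0 ≤ s := Real.sqrt_nonneg _
  have key : ∀ t : ℝ, ((t:ℂ) ∈ spectrum ℂ M) ↔ (t = (x+y-s)/2 ∨ t = (x+y+s)/2) := by
    intro t
    rw [spectrum.mem_iff, Matrix.isUnit_iff_isUnit_det, isUnit_iff_ne_zero, not_not]
    have : ((algebraMap ℂ (Matrix (Fin 2) (Fin 2) ℂ)) (t:ℂ) - M).det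
        = ((t:ℂ) - x) * ((t:ℂ) - y) - z * (starRingEnd ℂ) z := by
      rw [Matrix.det_fin_two]
      simp [Matrix.algebraMap_matrix_apply, hx, hy, hz, hz']
      try ring
    rw [this]
    have hzz : z * (starRingEnd ℂ) z = (Complex.normSq z : ℂ) := Complex.mul_conj z
    rw [hzz]
    constructor
    · intro h
      have h' : ((t - x) * (t - y) - Complex.normSq z : ℝ) = 0 := by
        exact_mod_cast (by push_cast at h ⊢; linear_combination h : ((t - x) * (t - y) - Complex.normSq z : ℂ) = 0)
      have : (t - (x+y-s)/2) * (t - (x+y+s)/2) = 0 := by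
        have : (t - (x+y-s)/2) * (t - (x+y+s)/2)
            = (t-x)*(t-y) - Complex.normSq z := by
          have : s^2 = (x-y)^2 + 4*Complex.normSq z := hs2
          nlinarith [hs2]
        rw [this, h']
      rcases mul_eq_zero.mp this with h | h
      · left; linarith [sub_eq_zero.mp h]
      · right; linarith [sub_eq_zero.mp h]
    · intro h
      have : ((t:ℝ) - x) * (t - y) - Complex.normSq z = 0 := by
        rcases h with h | h <;> subst h <;> nlinarith [hs2]
      push_cast
      have := this
      calc ((t:ℂ) - x) * ((t:ℂ) - y) - (Complex.normSq z : ℂ)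
          = (((t - x) * (t - y) - Complex.normSq z : ℝ) : ℂ) := by push_cast; ring
        _ = 0 := by rw [this]; simp
  have hset : {t : ℝ | (t : ℂ) ∈ spectrum ℂ M} = {(x+y-s)/2, (x+y+s)/2} := by
    ext t; simp [key t, Set.mem_insert_iff]
  rw [minEig, hset, csInf_pair]
  have : (x+y-s)/2 ≤ (x+y+s)/2 := by linarith
  rw [min_eq_left this]


lemma minEig_trace_one (M : Matrix (Fin 2) (Fin 2) ℂ) (x y : ℝ) (z : ℂ)
    (hx : M 0 0 = (x:ℂ)) (hy : M 1 1 = (y:ℂ)) (hz : M 0 1 = z)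
    (hz' : M 1 0 = (starRingEnd ℂ) z) (hxy : x + y = 1) :
    minEig M = (1 - Real.sqrt (1 - 4*(x*y - Complex.normSq z)))/2 := by
  rw [minEig_eq M x y z hx hy hz hz']
  have harg : (x-y)^2 + 4 * Complex.normSq z = 1 - 4*(x*y - Complex.normSq z) := by
    linear_combination (x + y + 1) * hxy
  rw [harg, hxy]

lemma rho1_repr (u : H3) :
    ∃ (x y : ℝ) (z : ℂ), rho1 u 0 0 = (x:ℂ) ∧ rho1 u 1 1 = (y:ℂ) ∧ rho1 u 0 1 = z ∧
      rho1 u 1 0 = (starRingEnd ℂ) z ∧ x + y = normSq3 u := by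
  refine ⟨∑ b : Fin 2, ∑ c : Fin 2, Complex.normSq (u (0, b, c)),
    ∑ b : Fin 2, ∑ c : Fin 2, Complex.normSq (u (1, b, c)),
    rho1 u 0 1, ?_, ?_, rfl, ?_, ?_⟩
  · simp [rho1, Complex.mul_conj]
  · simp [rho1, Complex.mul_conj]
  · simp [rho1, Fin.sum_univ_two]
    ring
  · rw [normSq3, Fintype.sum_prod_type]
    simp [Fin.sum_univ_two, Fintype.sum_prod_type]

lemma rho2_repr (u : H3) :
    ∃ (x y : ℝ) (z : ℂ), rho2 u 0 0 = (x:ℂ) ∧ rho2 u 1 1 = (y:ℂ) ∧ rho2 u 0 1 = z ∧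
      rho2 u 1 0 = (starRingEnd ℂ) z ∧ x + y = normSq3 u := by
  refine ⟨∑ a : Fin 2, ∑ c : Fin 2, Complex.normSq (u (a, 0, c)),
    ∑ a : Fin 2, ∑ c : Fin 2, Complex.normSq (u (a, 1, c)),
    rho2 u 0 1, ?_, ?_, rfl, ?_, ?_⟩
  · simp [rho2, Complex.mul_conj]
  · simp [rho2, Complex.mul_conj]
  · simp [rho2, Fin.sum_univ_two]
    ring
  · rw [normSq3, Fintype.sum_prod_type]
    simp [Fin.sum_univ_two, Fintype.sum_prod_type]
    try ring

lemma rho3_repr (u : H3) :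
    ∃ (x y : ℝ) (z : ℂ), rho3 u 0 0 = (x:ℂ) ∧ rho3 u 1 1 = (y:ℂ) ∧ rho3 u 0 1 = z ∧
      rho3 u 1 0 = (starRingEnd ℂ) z ∧ x + y = normSq3 u := by
  refine ⟨∑ a : Fin 2, ∑ b : Fin 2, Complex.normSq (u (a, b, 0)),
    ∑ a : Fin 2, ∑ b : Fin 2, Complex.normSq (u (a, b, 1)),
    rho3 u 0 1, ?_, ?_, rfl, ?_, ?_⟩
  · simp [rho3, Complex.mul_conj]
  · simp [rho3, Complex.mul_conj]
  · simp [rho3, Fin.sum_univ_two]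
    ring
  · rw [normSq3, Fintype.sum_prod_type]
    simp [Fin.sum_univ_two, Fintype.sum_prod_type]
    try ring

lemma p_self (p E : ℝ) (hE : 0 ≤ E) (hp : p = (1 - Real.sqrt E)/2) :
    p = (1 - Real.sqrt (1 - 4*(p*(1-p))))/2 := by
  have h2 : Real.sqrt E ^ 2 = E := Real.sq_sqrt hE
  have h3 : 1 - 4*(p*(1-p)) = (Real.sqrt E)^2 := by rw [hp]; ring
  rw [h3, Real.sqrt_sq (Real.sqrt_nonneg E)]
  exact hp

noncomputable def hdet (v : H3) : ℂ :=
  (v (0,0,0) * v (1,1,1) + v (1,0,0) * v (0,1,1)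
    - v (0,0,1) * v (1,1,0) - v (0,1,0) * v (1,0,1))^2
  - 4 * (v (0,0,0) * v (0,1,1) - v (0,0,1) * v (0,1,0))
      * (v (1,0,0) * v (1,1,1) - v (1,0,1) * v (1,1,0))

lemma tensor3_apply (A1 A2 A3 : Matrix (Fin 2) (Fin 2) ℂ) (v : H3) (a b c : Fin 2) :
    tensor3 A1 A2 A3 v (a,b,c) =
      ∑ a' : Fin 2, ∑ b' : Fin 2, ∑ c' : Fin 2,
        A1 a a' * A2 b b' * A3 c c' * v (a', b', c') := rfl

lemma tensor3_one_left (A : Matrix (Fin 2) (Fin 2) ℂ) (v : H3) :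
    hdet (tensor3 A 1 1 v) = A.det^2 * hdet v := by
  simp only [hdet, tensor3_apply, Fin.sum_univ_two, Matrix.one_apply, Matrix.det_fin_two]
  norm_num
  ring

lemma tensor3_one_mid (A : Matrix (Fin 2) (Fin 2) ℂ) (v : H3) :
    hdet (tensor3 1 A 1 v) = A.det^2 * hdet v := by
  simp only [hdet, tensor3_apply, Fin.sum_univ_two, Matrix.one_apply, Matrix.det_fin_two]
  norm_num
  ring

lemma tensor3_one_right (A : Matrix (Fin 2) (Fin 2) ℂ) (v : H3) :
    hdet (tensor3 1 1 A v) = A.det^2 * hdet v := by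
  simp only [hdet, tensor3_apply, Fin.sum_univ_two, Matrix.one_apply, Matrix.det_fin_two]
  norm_num
  ring

lemma tensor3_comp (A1 A2 A3 : Matrix (Fin 2) (Fin 2) ℂ) (v : H3) :
    tensor3 A1 A2 A3 v = tensor3 A1 1 1 (tensor3 1 A2 1 (tensor3 1 1 A3 v)) := by
  funext x
  obtain ⟨a, b, c⟩ := x
  fin_cases b <;> fin_cases c <;>
    · simp only [tensor3_apply, Fin.sum_univ_two, Matrix.one_apply]
      norm_num
      ring

lemma hdet_tensor3 (A1 A2 A3 : Matrix (Fin 2) (Fin 2) ℂ) (v : H3) :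
    hdet (tensor3 A1 A2 A3 v) = (A1.det * A2.det * A3.det)^2 * hdet v := by
  rw [tensor3_comp, tensor3_one_left, tensor3_one_mid, tensor3_one_right]
  ring

noncomputable def wit (a b c d f : ℝ) : H3 := fun x =>
  if x = (0,0,0) then (a:ℂ) else if x = (0,1,1) then (b:ℂ) else if x = (1,0,1) then (c:ℂ)
  else if x = (1,1,0) then (d:ℂ) else if x = (1,1,1) then (f:ℂ) else 0

lemma wit_normSq (a b c d f : ℝ) : normSq3 (wit a b c d f) = a^2+b^2+c^2+d^2+f^2 := by
  rw [normSq3, Fintype.sum_prod_type]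
  simp [Fin.sum_univ_two, Fintype.sum_prod_type, wit, Prod.ext_iff, Complex.normSq_ofReal]
  ring

lemma wit_rho1_00 (a b c d f : ℝ) : rho1 (wit a b c d f) 0 0 = ((a^2+b^2 : ℝ) : ℂ) := by
  simp [rho1, wit, Fin.sum_univ_two, Prod.ext_iff]
  try push_cast
  try ring

lemma wit_rho1_11 (a b c d f : ℝ) : rho1 (wit a b c d f) 1 1 = ((c^2+d^2+f^2 : ℝ) : ℂ) := by
  simp [rho1, wit, Fin.sum_univ_two, Prod.ext_iff]
  try push_cast
  try ring

lemma wit_rho1_01 (a b c d f : ℝ) : rho1 (wit a b c d f) 0 1 = ((b*f : ℝ) : ℂ) := by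
  simp [rho1, wit, Fin.sum_univ_two, Prod.ext_iff]
  try push_cast
  try ring

lemma wit_rho1_10 (a b c d f : ℝ) :
    rho1 (wit a b c d f) 1 0 = (starRingEnd ℂ) ((b*f : ℝ) : ℂ) := by
  simp [rho1, wit, Fin.sum_univ_two, Prod.ext_iff]
  try push_cast
  try ring

lemma wit_rho2_00 (a b c d f : ℝ) : rho2 (wit a b c d f) 0 0 = ((a^2+c^2 : ℝ) : ℂ) := by
  simp [rho2, wit, Fin.sum_univ_two, Prod.ext_iff]
  try push_cast
  try ring

lemma wit_rho2_11 (a b c d f : ℝ) : rho2 (wit a b c d f) 1 1 = ((b^2+d^2+f^2 : ℝ) : ℂ) := by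
  simp [rho2, wit, Fin.sum_univ_two, Prod.ext_iff]
  try push_cast
  try ring

lemma wit_rho2_01 (a b c d f : ℝ) : rho2 (wit a b c d f) 0 1 = ((c*f : ℝ) : ℂ) := by
  simp [rho2, wit, Fin.sum_univ_two, Prod.ext_iff]
  try push_cast
  try ring

lemma wit_rho2_10 (a b c d f : ℝ) :
    rho2 (wit a b c d f) 1 0 = (starRingEnd ℂ) ((c*f : ℝ) : ℂ) := by
  simp [rho2, wit, Fin.sum_univ_two, Prod.ext_iff]
  try push_cast
  try ring

lemma wit_rho3_00 (a b c d f : ℝ) : rho3 (wit a b c d f) 0 0 = ((a^2+d^2 : ℝ) : ℂ) := by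
  simp [rho3, wit, Fin.sum_univ_two, Prod.ext_iff]
  try push_cast
  try ring

lemma wit_rho3_11 (a b c d f : ℝ) : rho3 (wit a b c d f) 1 1 = ((b^2+c^2+f^2 : ℝ) : ℂ) := by
  simp [rho3, wit, Fin.sum_univ_two, Prod.ext_iff]
  try push_cast
  try ring

lemma wit_rho3_01 (a b c d f : ℝ) : rho3 (wit a b c d f) 0 1 = ((d*f : ℝ) : ℂ) := by
  simp [rho3, wit, Fin.sum_univ_two, Prod.ext_iff]
  try push_cast
  try ring

lemma wit_rho3_10 (a b c d f : ℝ) :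
    rho3 (wit a b c d f) 1 0 = (starRingEnd ℂ) ((d*f : ℝ) : ℂ) := by
  simp [rho3, wit, Fin.sum_univ_two, Prod.ext_iff]
  try push_cast
  try ring

lemma hdet_wit (a b c d f : ℝ) :
    hdet (wit a b c d f) = (((a*f)^2 + 4*(a*b)*(c*d) : ℝ) : ℂ) := by
  simp [hdet, wit, Prod.ext_iff]
  try push_cast
  try ring

lemma abs_det_unitary (U : Matrix (Fin 2) (Fin 2) ℂ)
    (hU : U ∈ Matrix.unitaryGroup (Fin 2) ℂ) : ‖U.det‖ = 1 := by
  have h := Matrix.det_of_mem_unitary hU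
  have h1 : (starRingEnd ℂ) U.det * U.det = 1 := (Unitary.mem_iff.mp h).1
  have : Complex.normSq U.det = 1 := by
    rw [← Complex.normSq_eq_conj_mul_self] at h1
    exact_mod_cast h1
  rw [Complex.norm_def, this, Real.sqrt_one]

/-- a pure three-qubit state whose local minimal eigenvalues lie in the
interior of the Kirwan polytope is never determined up to local unitaries by its local
spectra. -/
theorem interior_of_Kirwan_polytope_not_determined_up_to_LU
    (v : H3) (hv : normSq3 v = 1)
    (hlt1 : p1 v < 1 / 2) (hlt2 : p2 v < 1 / 2) (hlt3 : p3 v < 1 / 2)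
    (hpoly1 : p1 v < p2 v + p3 v) (hpoly2 : p2 v < p1 v + p3 v)
    (hpoly3 : p3 v < p1 v + p2 v) :
    ∃ w : H3, normSq3 w = 1 ∧ p1 w = p1 v ∧ p2 w = p2 v ∧ p3 w = p3 v ∧
      ¬ LUequiv v w := by

  -- spectral data of v
  obtain ⟨x1, y1, z1, hx1, hy1, hz1, hz1', hs1⟩ := rho1_repr v
  obtain ⟨x2, y2, z2, hx2, hy2, hz2, hz2', hs2⟩ := rho2_repr v
  obtain ⟨x3, y3, z3, hx3, hy3, hz3, hz3', hs3⟩ := rho3_repr v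
  rw [hv] at hs1 hs2 hs3
  have hE1 : (0:ℝ) ≤ (x1-y1)^2 + 4*Complex.normSq z1 :=
    add_nonneg (sq_nonneg _) (by nlinarith only [Complex.normSq_nonneg z1])
  have hE2 : (0:ℝ) ≤ (x2-y2)^2 + 4*Complex.normSq z2 :=
    add_nonneg (sq_nonneg _) (by nlinarith only [Complex.normSq_nonneg z2])
  have hE3 : (0:ℝ) ≤ (x3-y3)^2 + 4*Complex.normSq z3 :=
    add_nonneg (sq_nonneg _) (by nlinarith only [Complex.normSq_nonneg z3])
  have hr1 : (0:ℝ) ≤ 1 - 4*(x1*y1 - Complex.normSq z1) := by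
    have h : 1 - 4*(x1*y1 - Complex.normSq z1) = (x1-y1)^2 + 4*Complex.normSq z1 := by
      linear_combination (-(x1+y1+1)) * hs1
    rw [h]; exact hE1
  have hr2 : (0:ℝ) ≤ 1 - 4*(x2*y2 - Complex.normSq z2) := by
    have h : 1 - 4*(x2*y2 - Complex.normSq z2) = (x2-y2)^2 + 4*Complex.normSq z2 := by
      linear_combination (-(x2+y2+1)) * hs2
    rw [h]; exact hE2
  have hr3 : (0:ℝ) ≤ 1 - 4*(x3*y3 - Complex.normSq z3) := by
    have h : 1 - 4*(x3*y3 - Complex.normSq z3) = (x3-y3)^2 + 4*Complex.normSq z3 := by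
      linear_combination (-(x3+y3+1)) * hs3
    rw [h]; exact hE3
  have hp1f : p1 v = (1 - Real.sqrt (1 - 4*(x1*y1 - Complex.normSq z1)))/2 :=
    minEig_trace_one _ _ _ _ hx1 hy1 hz1 hz1' hs1
  have hp2f : p2 v = (1 - Real.sqrt (1 - 4*(x2*y2 - Complex.normSq z2)))/2 :=
    minEig_trace_one _ _ _ _ hx2 hy2 hz2 hz2' hs2
  have hp3f : p3 v = (1 - Real.sqrt (1 - 4*(x3*y3 - Complex.normSq z3)))/2 :=
    minEig_trace_one _ _ _ _ hx3 hy3 hz3 hz3' hs3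
  have hq1 : p1 v = (1 - Real.sqrt (1 - 4*(p1 v*(1-p1 v))))/2 := p_self _ _ hr1 hp1f
  have hq2 : p2 v = (1 - Real.sqrt (1 - 4*(p2 v*(1-p2 v))))/2 := p_self _ _ hr2 hp2f
  have hq3 : p3 v = (1 - Real.sqrt (1 - 4*(p3 v*(1-p3 v))))/2 := p_self _ _ hr3 hp3f
  -- construct parameters
  obtain ⟨X, Y, Z, T, G, hX, hY, hZ, hT, hG, hsum, heq1, heq2, heq3⟩ :=
    exists_params (p1 v) (p2 v) (p3 v) hlt1 hlt2 hlt3 hpoly1 hpoly2 hpoly3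
  set a := Real.sqrt X with hadef
  set b := Real.sqrt Y with hbdef
  set c := Real.sqrt Z with hcdef
  set d := Real.sqrt T with hddef
  set f := Real.sqrt G with hfdef
  have ha : a^2 = X := Real.sq_sqrt hX.le
  have hb : b^2 = Y := Real.sq_sqrt hY.le
  have hc : c^2 = Z := Real.sq_sqrt hZ.le
  have hd : d^2 = T := Real.sq_sqrt hT.le
  have hf : f^2 = G := Real.sq_sqrt hG.le
  have hap : 0 < a := Real.sqrt_pos.mpr hX
  have hbp : 0 < b := Real.sqrt_pos.mpr hY
  have hcp : 0 < c := Real.sqrt_pos.mpr hZ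
  have hdp : 0 < d := Real.sqrt_pos.mpr hT
  have hfp : 0 < f := Real.sqrt_pos.mpr hG
  -- both signs give the same spectra
  have main : ∀ d' : ℝ, d'^2 = T →
      normSq3 (wit a b c d' f) = 1 ∧ p1 (wit a b c d' f) = p1 v ∧
      p2 (wit a b c d' f) = p2 v ∧ p3 (wit a b c d' f) = p3 v := by
    intro d' hd'
    have hnorm : normSq3 (wit a b c d' f) = 1 := by
      rw [wit_normSq, ha, hb, hc, hd', hf]; linarith only [hsum]
    have htr1 : (a^2+b^2) + (c^2+d'^2+f^2) = 1 := by
      rw [ha, hb, hc, hd', hf]; linarith only [hsum]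
    have htr2 : (a^2+c^2) + (b^2+d'^2+f^2) = 1 := by
      rw [ha, hb, hc, hd', hf]; linarith only [hsum]
    have htr3 : (a^2+d'^2) + (b^2+c^2+f^2) = 1 := by
      rw [ha, hb, hc, hd', hf]; linarith only [hsum]
    have hnsq : ∀ r : ℝ, Complex.normSq ((r:ℝ):ℂ) = r^2 := by
      intro r; rw [Complex.normSq_ofReal]; ring
    refine ⟨hnorm, ?_, ?_, ?_⟩
    · have h := minEig_trace_one (rho1 (wit a b c d' f)) (a^2+b^2) (c^2+d'^2+f^2)
        (((b*f : ℝ):ℂ)) (wit_rho1_00 a b c d' f) (wit_rho1_11 a b c d' f)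
        (wit_rho1_01 a b c d' f) (wit_rho1_10 a b c d' f) htr1
      rw [hnsq] at h
      have hD : (a^2+b^2)*(c^2+d'^2+f^2) - (b*f)^2 = p1 v * (1 - p1 v) := by
        have expand : (a^2+b^2)*(c^2+d'^2+f^2) - (b*f)^2
            = (a^2+b^2)*(c^2+d'^2) + a^2*f^2 := by ring
        rw [expand, ha, hb, hc, hd', hf]
        linear_combination heq1
      rw [hD] at h
      show minEig (rho1 (wit a b c d' f)) = p1 v
      rw [h, ← hq1]
    · have h := minEig_trace_one (rho2 (wit a b c d' f)) (a^2+c^2) (b^2+d'^2+f^2)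
        (((c*f : ℝ):ℂ)) (wit_rho2_00 a b c d' f) (wit_rho2_11 a b c d' f)
        (wit_rho2_01 a b c d' f) (wit_rho2_10 a b c d' f) htr2
      rw [hnsq] at h
      have hD : (a^2+c^2)*(b^2+d'^2+f^2) - (c*f)^2 = p2 v * (1 - p2 v) := by
        have expand : (a^2+c^2)*(b^2+d'^2+f^2) - (c*f)^2
            = (a^2+c^2)*(b^2+d'^2) + a^2*f^2 := by ring
        rw [expand, ha, hb, hc, hd', hf]
        linear_combination heq2
      rw [hD] at h
      show minEig (rho2 (wit a b c d' f)) = p2 v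
      rw [h, ← hq2]
    · have h := minEig_trace_one (rho3 (wit a b c d' f)) (a^2+d'^2) (b^2+c^2+f^2)
        (((d'*f : ℝ):ℂ)) (wit_rho3_00 a b c d' f) (wit_rho3_11 a b c d' f)
        (wit_rho3_01 a b c d' f) (wit_rho3_10 a b c d' f) htr3
      rw [hnsq] at h
      have hD : (a^2+d'^2)*(b^2+c^2+f^2) - (d'*f)^2 = p3 v * (1 - p3 v) := by
        have expand : (a^2+d'^2)*(b^2+c^2+f^2) - (d'*f)^2
            = (a^2+d'^2)*(b^2+c^2) + a^2*f^2 := by ring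
        rw [expand, ha, hb, hc, hd', hf]
        linear_combination heq3
      rw [hD] at h
      show minEig (rho3 (wit a b c d' f)) = p3 v
      rw [h, ← hq3]
  have main1 := main d hd
  have main2 := main (-d) (by rw [← hd]; ring)
  -- LU equivalence preserves |hdet|
  have lu_abs : ∀ w : H3, LUequiv v w → ‖hdet w‖ = ‖hdet v‖ := by
    rintro w ⟨U1, U2, U3, hU1, hU2, hU3, hweq⟩
    rw [hweq, hdet_tensor3, norm_mul, norm_pow, norm_mul, norm_mul,
      abs_det_unitary U1 hU1, abs_det_unitary U2 hU2, abs_det_unitary U3 hU3]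
    norm_num
  -- the two candidate hdet values
  have habs1 : ‖hdet (wit a b c d f)‖ = (a*f)^2 + 4*(a*b)*(c*d) := by
    rw [hdet_wit, Complex.norm_real, Real.norm_eq_abs, abs_of_pos (by nlinarith only [pow_pos (mul_pos hap hfp) 2, mul_pos (mul_pos hap hbp) (mul_pos hcp hdp)])]
  have habs2 : ‖hdet (wit a b c (-d) f)‖ = |(a*f)^2 + 4*(a*b)*(c*(-d))| := by
    rw [hdet_wit, Complex.norm_real, Real.norm_eq_abs]
  have hne : ‖hdet (wit a b c (-d) f)‖ < ‖hdet (wit a b c d f)‖ := by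
    rw [habs1, habs2, abs_lt]
    constructor <;> nlinarith only [pow_pos (mul_pos hap hfp) 2, mul_pos (mul_pos hap hbp) (mul_pos hcp hdp)]
  by_cases hcase : ‖hdet v‖ = ‖hdet (wit a b c d f)‖
  · refine ⟨wit a b c (-d) f, main2.1, main2.2.1, main2.2.2.1, main2.2.2.2, ?_⟩
    intro hlu
    have := lu_abs _ hlu
    rw [this, hcase] at hne
    exact lt_irrefl _ hne
  · refine ⟨wit a b c d f, main1.1, main1.2.1, main1.2.2.1, main1.2.2.2, ?_⟩
    intro hlu
    exact hcase (lu_abs _ hlu).symm
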